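/- Let 𝒜 be a complete abelian LSA, and suppose λ, λ̃ : ℝⁿ → gl(n,ℝ) are two (commutative, complete) LSA structures such that (I + λ_x)^{-1}x = (I + λ̃_x)^{-1}x for all x ∈ ℝⁿ. Then λ = λ̃. -/
import Mathlib


open Matrix

lemma aux_sum_mulVec {n : ℕ} {ι : Type*} (f : ι → Matrix (Fin n) (Fin n) ℝ)
    (s : Finset ι) (x : Fin n → ℝ) :
    (∑ k ∈ s, f k).mulVec x = ∑ k ∈ s, (f k).mulVec x := by
  classical
  induction s using Finset.cons_induction with
  | empty => simp
  | cons a s ha ih => simp [Finset.sum_insert ha, Matrix.add_mulVec, ih]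

/-- For a nilpotent matrix `N` with `N ^ r = 0`, the inverse of `1 + t • N` is the
finite geometric series `∑ (-(t • N)) ^ k`. -/
lemma aux_inv_one_add_smul {n r : ℕ} (N : Matrix (Fin n) (Fin n) ℝ) (hr : N ^ r = 0) (t : ℝ) :
    (1 + t • N)⁻¹ = ∑ k ∈ Finset.range r, (-(t • N)) ^ k := by
  apply Matrix.inv_eq_right_inv
  have h := mul_neg_geom_sum (-(t • N)) r
  have ha : (-(t • N)) ^ r = 0 := by
    rw [neg_pow, smul_pow, hr, smul_zero, mul_zero]
  rw [sub_neg_eq_add, ha, sub_zero] at h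
  exact h

/-- The diagonal identity: `λ_x x = λ'_x x`. -/
lemma aux_diag {n : ℕ}
    (lam lam' : (Fin n → ℝ) →ₗ[ℝ] Matrix (Fin n) (Fin n) ℝ)
    (hnil : ∀ x, IsNilpotent (lam x)) (hnil' : ∀ x, IsNilpotent (lam' x))
    (heq : ∀ x, (1 + lam x)⁻¹.mulVec x = (1 + lam' x)⁻¹.mulVec x) (x : Fin n → ℝ) :
    (lam x).mulVec x = (lam' x).mulVec x := by
  set N := lam x with hN
  set M := lam' x with hM
  obtain ⟨r, hr⟩ := hnil x
  obtain ⟨s, hs⟩ := hnil' x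
  -- the truncated geometric series applied to x
  set v : ℝ → (Fin n → ℝ) := fun t => ∑ k ∈ Finset.range r, (-t) ^ k • (N ^ k).mulVec x with hv
  set w : ℝ → (Fin n → ℝ) := fun t => ∑ k ∈ Finset.range s, (-t) ^ k • (M ^ k).mulVec x with hw
  have hSv : ∀ t : ℝ, (∑ k ∈ Finset.range r, (-(t • N)) ^ k).mulVec x = v t := by
    intro t
    rw [hv, aux_sum_mulVec]
    refine Finset.sum_congr rfl fun k _ => ?_
    rw [← neg_smul, smul_pow, Matrix.smul_mulVec]
  have hSw : ∀ t : ℝ, (∑ k ∈ Finset.range s, (-(t • M)) ^ k).mulVec x = w t := by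
    intro t
    rw [hw, aux_sum_mulVec]
    refine Finset.sum_congr rfl fun k _ => ?_
    rw [← neg_smul, smul_pow, Matrix.smul_mulVec]
  -- the basic relation (1 + t•N) *ᵥ v t = x
  have hrel : ∀ t : ℝ, v t + t • N.mulVec (v t) = x := by
    intro t
    have h1 : (1 + t • N) * (∑ k ∈ Finset.range r, (-(t • N)) ^ k) = 1 := by
      have h := mul_neg_geom_sum (-(t • N)) r
      have ha : (-(t • N)) ^ r = 0 := by
        rw [neg_pow, smul_pow, hr, smul_zero, mul_zero]
      rw [sub_neg_eq_add, ha, sub_zero] at h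
      exact h
    have := congrArg (fun A => A.mulVec x) h1
    simp only [Matrix.one_mulVec, ← Matrix.mulVec_mulVec] at this
    rw [hSv, Matrix.add_mulVec, Matrix.one_mulVec, Matrix.smul_mulVec] at this
    exact this
  have hrel' : ∀ t : ℝ, w t + t • M.mulVec (w t) = x := by
    intro t
    have h1 : (1 + t • M) * (∑ k ∈ Finset.range s, (-(t • M)) ^ k) = 1 := by
      have h := mul_neg_geom_sum (-(t • M)) s
      have ha : (-(t • M)) ^ s = 0 := by
        rw [neg_pow, smul_pow, hs, smul_zero, mul_zero]
      rw [sub_neg_eq_add, ha, sub_zero] at h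
      exact h
    have := congrArg (fun A => A.mulVec x) h1
    simp only [Matrix.one_mulVec, ← Matrix.mulVec_mulVec] at this
    rw [hSw, Matrix.add_mulVec, Matrix.one_mulVec, Matrix.smul_mulVec] at this
    exact this
  -- heq at t • x gives t • v t = t • w t
  have hvw : ∀ t : ℝ, t • v t = t • w t := by
    intro t
    have h := heq (t • x)
    have hlam : lam (t • x) = t • N := by rw [_root_.map_smul, hN]
    have hlam' : lam' (t • x) = t • M := by rw [_root_.map_smul, hM]
    rw [hlam, hlam', aux_inv_one_add_smul N hr t, aux_inv_one_add_smul M hs t,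
      Matrix.mulVec_smul, Matrix.mulVec_smul, hSv, hSw] at h
    exact h
  -- hence N.mulVec (v t) = M.mulVec (w t) for t ≠ 0
  have hkey : ∀ t : ℝ, t ≠ 0 → N.mulVec (v t) = M.mulVec (w t) := by
    intro t ht
    have h1 : v t = w t := smul_right_injective _ ht (hvw t)
    have h2 := (hrel t).trans (hrel' t).symm
    rw [h1] at h2
    have h3 : t • N.mulVec (w t) = t • M.mulVec (w t) := by
      have := add_left_cancel h2
      rw [h1] at *
      exact this
    have := smul_right_injective (Fin n → ℝ) ht h3
    rw [h1]
    exact this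
  -- continuity: the two sides are continuous in t, equal on the dense set {t ≠ 0}
  have hcv : Continuous fun t => N.mulVec (v t) := by
    have : Continuous v := by
      apply continuous_finset_sum
      intro k _
      exact (continuous_pow k).comp continuous_neg |>.smul continuous_const
    exact (Matrix.mulVecLin N).continuous_of_finiteDimensional.comp this
  have hcw : Continuous fun t => M.mulVec (w t) := by
    have : Continuous w := by
      apply continuous_finset_sum
      intro k _
      exact (continuous_pow k).comp continuous_neg |>.smul continuous_const
    exact (Matrix.mulVecLin M).continuous_of_finiteDimensional.comp this
  have hdense : Dense {t : ℝ | t ≠ 0} := dense_compl_singleton 0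
  have hfg : (fun t => N.mulVec (v t)) = fun t => M.mulVec (w t) :=
    Continuous.ext_on hdense hcv hcw fun t ht => hkey t ht
  have h0 := congrFun hfg 0
  have hv0 : v 0 = x := by
    simp only [hv]
    rcases Nat.eq_zero_or_pos r with h | h
    · subst h
      rw [pow_zero] at hr
      funext i
      exact absurd (congrFun (congrFun hr i) i) (by simp [Matrix.one_apply])
    · rw [Finset.sum_eq_single 0]
      · simp
      · intro k _ hk
        rw [neg_zero, zero_pow hk, zero_smul]
      · intro h'; simp at h'; omega
  have hw0 : w 0 = x := by
    simp only [hw]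
    rcases Nat.eq_zero_or_pos s with h | h
    · subst h
      rw [pow_zero] at hs
      funext i
      exact absurd (congrFun (congrFun hs i) i) (by simp [Matrix.one_apply])
    · rw [Finset.sum_eq_single 0]
      · simp
      · intro k _ hk
        rw [neg_zero, zero_pow hk, zero_smul]
      · intro h'; simp at h'; omega
  rw [hv0] at h0
  rw [hw0] at h0
  exact h0

theorem stmt_6 (n : ℕ)
    (lam lam' : (Fin n → ℝ) →ₗ[ℝ] Matrix (Fin n) (Fin n) ℝ)
    (hnil : ∀ x, IsNilpotent (lam x)) (hnil' : ∀ x, IsNilpotent (lam' x))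
    (hcomm : ∀ x y, (lam x).mulVec y = (lam y).mulVec x)
    (hcomm' : ∀ x y, (lam' x).mulVec y = (lam' y).mulVec x)
    (hassoc : ∀ x y, lam x * lam y = lam ((lam x).mulVec y))
    (hassoc' : ∀ x y, lam' x * lam' y = lam' ((lam' x).mulVec y))
    (heq : ∀ x, (1 + lam x)⁻¹.mulVec x = (1 + lam' x)⁻¹.mulVec x) :
    lam = lam' := by
  have hdiag := aux_diag lam lam' hnil hnil' heq
  -- polarize
  have hpol : ∀ x y, (lam x).mulVec y = (lam' x).mulVec y := by
    intro x y
    have h1 := hdiag (x + y)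
    have h2 := hdiag x
    have h3 := hdiag y
    have e1 : (lam (x + y)).mulVec (x + y)
        = (lam x).mulVec x + (2 : ℝ) • (lam x).mulVec y + (lam y).mulVec y := by
      rw [map_add, Matrix.add_mulVec, Matrix.mulVec_add, Matrix.mulVec_add,
        hcomm y x]
      module
    have e2 : (lam' (x + y)).mulVec (x + y)
        = (lam' x).mulVec x + (2 : ℝ) • (lam' x).mulVec y + (lam' y).mulVec y := by
      rw [map_add, Matrix.add_mulVec, Matrix.mulVec_add, Matrix.mulVec_add,
        hcomm' y x]
      module
    rw [e1, e2, h2, h3] at h1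
    have h4 : (2 : ℝ) • (lam x).mulVec y = (2 : ℝ) • (lam' x).mulVec y :=
      add_left_cancel (add_right_cancel h1)
    have := smul_right_injective (Fin n → ℝ) (two_ne_zero (α := ℝ)) h4
    exact this
  apply LinearMap.ext
  intro x
  apply Matrix.ext
  intro i j
  have h := congrFun (hpol x (Pi.single j 1)) i
  simpa [Matrix.mulVec_single] using h
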